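/- arXiv:2603.05082 — 2 statements merged into one kernel-verified Lean document; each statement's English description precedes it below -/
import Mathlib

section
/- Let L ⊆ {0,1}^h be a set of leaves, 𝛕 a label of height h, and 𝛔 a non-interacting SWAP with indices I. Let s be an ℓ-bit string with ℓ ∉ I. Then s is a τL-truncation if and only if σ_ℓ s is a (𝛔𝛕)L-truncation; more precisely, if s is a prefix of some s_leaf ∈ τ_h L, then σ_ℓ s is a prefix of σ_h s_leaf ∈ (σ_h τ_h)L. -/
abbrev F2 := ZMod 2

/-- The action of a permutation of positions on a list: `(π · l) j = l (π⁻¹ j)`.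
(Out-of-range positions are filled with `default`; these are never used when the
permutation has support inside the length of the list.) -/
def permList {α : Type*} [Inhabited α] (π : Equiv.Perm ℕ) (l : List α) : List α :=
  (List.range l.length).map fun j => l.getD (π.symm j) default

/-- A label of height `h`: a family of permutations `τ_ℓ` of the positions `{0, …, ℓ-1}`
(0-indexed); each `τ_ℓ` fixes all positions `≥ ℓ`. -/
def IsLabel (h : ℕ) (τ : ℕ → Equiv.Perm ℕ) : Prop :=
  ∀ ℓ j, ℓ ≤ h → ℓ ≤ j → τ ℓ j = j

/-- `σ` is the non-interacting SWAP of height `h` with indices `I` (0-indexed):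
the pairs `{i,i+1}`, `i ∈ I`, are pairwise disjoint and contained in `{0,…,h-1}`, and
`σ_ℓ` is the product of the transpositions of positions `i, i+1` over `i ∈ I` with
`i + 1 ≤ ℓ - 1`. -/
def IsNonInteractingSwap (h : ℕ) (I : Finset ℕ) (σ : ℕ → Equiv.Perm ℕ) : Prop :=
  (∀ i ∈ I, i + 2 ≤ h) ∧
  (∀ i ∈ I, ∀ j ∈ I, i ≠ j → i + 2 ≤ j ∨ j + 2 ≤ i) ∧
  (∀ ℓ, ∀ i ∈ I, i + 2 ≤ ℓ → σ ℓ i = i + 1 ∧ σ ℓ (i + 1) = i) ∧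
  (∀ ℓ j, (¬∃ i ∈ I, i + 2 ≤ ℓ ∧ (j = i ∨ j = i + 1)) → σ ℓ j = j)

/-- The map `σ⋆`: it sends an `ℓ`-bit string `s` to `s` (viewed as a starred string) if the
last position of `s` is not swapped out of the string (i.e. `ℓ ∉ I`, 1-indexed), and to
`(ωs)⋆` — last bit replaced by the placeholder `⋆` (here `none`) — otherwise. -/
def sigmaStar (I : Finset ℕ) (s : List Bool) : List (Option Bool) :=
  if s ≠ [] ∧ (s.length - 1) ∈ I then (s.dropLast.map some) ++ [none] else s.map some

/-- `s` is a `τL`-truncation: `s` is a prefix of some element of `τ_h L`. -/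
def IsTrunc (τh : Equiv.Perm ℕ) (L : Finset (List Bool)) (s : List Bool) : Prop :=
  ∃ t ∈ L, s <+: permList τh t

/-- `s` is `τL`-branching: either `s` is empty, or `s ∈ τ_h L`, or `0 < ‖s‖ < h` and both
`s0` and `s1` are `τL`-truncations. -/
def IsBranching (h : ℕ) (τh : Equiv.Perm ℕ) (L : Finset (List Bool)) (s : List Bool) :
    Prop :=
  s = [] ∨ (∃ t ∈ L, s = permList τh t) ∨
    (0 < s.length ∧ s.length < h ∧
      IsTrunc τh L (s ++ [false]) ∧ IsTrunc τh L (s ++ [true]))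

/-- The branching truncation `Ω^{τL} s`: the longest strict prefix of `s` that is
`τL`-branching. -/
noncomputable def Omega (h : ℕ) (τh : Equiv.Perm ℕ) (L : Finset (List Bool))
    (s : List Bool) : List Bool :=
  s.take (sSup {k | k < s.length ∧ IsBranching h τh L (s.take k)})

lemma permList_length {α : Type*} [Inhabited α] (π : Equiv.Perm ℕ) (l : List α) :
    (permList π l).length = l.length := by simp [permList]

lemma permList_getElem {α : Type*} [Inhabited α] (π : Equiv.Perm ℕ) (l : List α) (j : ℕ)
    (hj : j < (permList π l).length) :
    (permList π l)[j] = l.getD (π.symm j) default := by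
  simp [permList]

lemma permList_one {α : Type*} [Inhabited α] (l : List α) : permList 1 l = l := by
  apply List.ext_getElem (by simp [permList_length])
  intro j h1 h2
  rw [permList_getElem, List.getD_eq_getElem _ _ (by exact h2)]
  rfl

lemma permList_mul {α : Type*} [Inhabited α] (π ρ : Equiv.Perm ℕ) (l : List α)
    (hπ : ∀ j < l.length, π.symm j < l.length) :
    permList π (permList ρ l) = permList (π * ρ) l := by
  apply List.ext_getElem (by simp [permList_length])
  intro j h1 h2
  rw [permList_getElem, permList_getElem]
  have hj : π.symm j < l.length := hπ j (by simpa [permList_length] using h2)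
  rw [List.getD_eq_getElem _ _ (by simpa [permList_length] using hj), permList_getElem]
  rfl

section Swap
variable {h : ℕ} {I : Finset ℕ} {σ : ℕ → Equiv.Perm ℕ}

lemma swap_lt (hσ : IsNonInteractingSwap h I σ) (ℓ j : ℕ) (hj : j < ℓ) : σ ℓ j < ℓ := by
  obtain ⟨h1, h2, h3, h4⟩ := hσ
  by_cases hc : ∃ i ∈ I, i + 2 ≤ ℓ ∧ (j = i ∨ j = i + 1)
  · obtain ⟨i, hi, hle, hji⟩ := hc
    rcases hji with rfl | rfl
    · rw [(h3 ℓ j hi hle).1]; omega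
    · rw [(h3 ℓ i hi hle).2]; omega
  · rw [h4 ℓ j hc]; exact hj

lemma swap_invol (hσ : IsNonInteractingSwap h I σ) (ℓ j : ℕ) : σ ℓ (σ ℓ j) = j := by
  obtain ⟨h1, h2, h3, h4⟩ := hσ
  by_cases hc : ∃ i ∈ I, i + 2 ≤ ℓ ∧ (j = i ∨ j = i + 1)
  · obtain ⟨i, hi, hle, hji⟩ := hc
    rcases hji with rfl | rfl
    · rw [(h3 ℓ j hi hle).1, (h3 ℓ j hi hle).2]
    · rw [(h3 ℓ i hi hle).2, (h3 ℓ i hi hle).1]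
  · rw [h4 ℓ j hc, h4 ℓ j hc]

lemma swap_symm (hσ : IsNonInteractingSwap h I σ) (ℓ j : ℕ) : (σ ℓ).symm j = σ ℓ j :=
  (Equiv.symm_apply_eq _).2 (swap_invol hσ ℓ j).symm

lemma swap_agree (hσ : IsNonInteractingSwap h I σ) {ℓ : ℕ} (hℓ : ℓ ≤ h)
    (hnot : ℓ = 0 ∨ (ℓ - 1) ∉ I) {j : ℕ} (hj : j < ℓ) : σ ℓ j = σ h j := by
  obtain ⟨h1, h2, h3, h4⟩ := hσ
  by_cases hc : ∃ i ∈ I, i + 2 ≤ ℓ ∧ (j = i ∨ j = i + 1)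
  · obtain ⟨i, hi, hle, hji⟩ := hc
    have hle' : i + 2 ≤ h := le_trans hle hℓ
    rcases hji with rfl | rfl
    · rw [(h3 ℓ j hi hle).1, (h3 h j hi hle').1]
    · rw [(h3 ℓ i hi hle).2, (h3 h i hi hle').2]
  · rw [h4 ℓ j hc]
    have hc' : ¬∃ i ∈ I, i + 2 ≤ h ∧ (j = i ∨ j = i + 1) := by
      rintro ⟨i, hi, hih, hji⟩
      have hle : ¬ (i + 2 ≤ ℓ) := fun hle => hc ⟨i, hi, hle, hji⟩
      have hji' : j = i := by omega
      have hi' : ℓ - 1 = i := by omega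
      rcases hnot with h0 | hni
      · omega
      · exact hni (hi' ▸ hi)
    rw [h4 h j hc']

lemma prefix_key (hσ : IsNonInteractingSwap h I σ) {ℓ : ℕ} (hℓ : ℓ ≤ h)
    (hnot : ℓ = 0 ∨ (ℓ - 1) ∉ I)
    (s u : List Bool) (hsl : s.length = ℓ) (hu : u.length = h)
    (pre : s <+: u) :
    permList (σ ℓ) s <+: permList (σ h) u := by
  have heq : permList (σ ℓ) s = (permList (σ h) u).take ℓ := by
    apply List.ext_getElem
    · simp [permList_length, hsl, hu]; omega
    intro j h1 h2
    have hjℓ : j < ℓ := by simpa [permList_length, hsl] using h1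
    have hlt : σ ℓ j < ℓ := swap_lt hσ ℓ j hjℓ
    rw [List.getElem_take, permList_getElem, permList_getElem, swap_symm hσ, swap_symm hσ,
      ← swap_agree hσ hℓ hnot hjℓ,
      List.getD_eq_getElem _ _ (by omega : σ ℓ j < s.length),
      List.getD_eq_getElem _ _ (by omega : σ ℓ j < u.length)]
    exact pre.getElem (by omega)
  rw [heq]
  exact List.take_prefix _ _

end Swap

theorem stmt6 (h : ℕ) (I : Finset ℕ) (σ τ : ℕ → Equiv.Perm ℕ) (L : Finset (List Bool))
    (hσ : IsNonInteractingSwap h I σ) (hτ : IsLabel h τ)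
    (hL : ∀ t ∈ L, t.length = h)
    (s : List Bool) (hs : s.length ≤ h)
    (hnot : s = [] ∨ (s.length - 1) ∉ I) :
    (IsTrunc (τ h) L s ↔ IsTrunc (σ h * τ h) L (permList (σ s.length) s)) ∧
    (∀ t ∈ L, s <+: permList (τ h) t →
      permList (σ s.length) s <+: permList (σ h) (permList (τ h) t) ∧
      permList (σ h) (permList (τ h) t) = permList (σ h * τ h) t) := by
  set ℓ := s.length with hℓdef
  have hnot' : ℓ = 0 ∨ (ℓ - 1) ∉ I := by
    rcases hnot with rfl | hn
    · left; rfl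
    · right; exact hn
  have hsymm_lt : ∀ m j, j < m → (σ m).symm j < m := fun m j hj => by
    rw [swap_symm hσ]; exact swap_lt hσ m j hj
  have key : ∀ t ∈ L, s <+: permList (τ h) t →
      permList (σ ℓ) s <+: permList (σ h) (permList (τ h) t) ∧
      permList (σ h) (permList (τ h) t) = permList (σ h * τ h) t := by
    intro t ht pre
    have hu : (permList (τ h) t).length = h := by rw [permList_length, hL t ht]
    refine ⟨prefix_key hσ hs hnot' s _ rfl hu pre, ?_⟩
    exact permList_mul (σ h) (τ h) t (fun j hj => by
      rw [hL t ht] at hj ⊢; exact hsymm_lt h j hj)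
  refine ⟨⟨?_, ?_⟩, key⟩
  · rintro ⟨t, ht, pre⟩
    exact ⟨t, ht, (key t ht pre).2 ▸ (key t ht pre).1⟩
  · rintro ⟨t, ht, pre⟩
    refine ⟨t, ht, ?_⟩
    have hu : (permList (τ h) t).length = h := by rw [permList_length, hL t ht]
    have heq : permList (σ h) (permList (τ h) t) = permList (σ h * τ h) t :=
      permList_mul (σ h) (τ h) t (fun j hj => by
        rw [hL t ht] at hj ⊢; exact hsymm_lt h j hj)
    rw [← heq] at pre
    have hlen : (permList (σ ℓ) s).length = ℓ := by rw [permList_length]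
    have hulen : (permList (σ h) (permList (τ h) t)).length = h := by
      rw [permList_length, hu]
    have pre2 := prefix_key hσ hs hnot' _ _ hlen hulen pre
    have e1 : permList (σ ℓ) (permList (σ ℓ) s) = s := by
      rw [permList_mul _ _ _ (fun j hj => hsymm_lt ℓ j hj)]
      have : σ ℓ * σ ℓ = 1 := by
        ext j; simp [Equiv.Perm.mul_apply, swap_invol hσ]
      rw [this, permList_one]
    have e2 : permList (σ h) (permList (σ h) (permList (τ h) t)) = permList (τ h) t := by
      rw [permList_mul _ _ _ (fun j hj => by rw [hu] at hj ⊢; exact hsymm_lt h j hj)]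
      have : σ h * σ h = 1 := by
        ext j; simp [Equiv.Perm.mul_apply, swap_invol hσ]
      rw [this, permList_one]
    rwa [e1, e2] at pre2
end

section
/- Let L ⊆ {0,1}^h be a set of leaves, 𝛕 a label of height h, and 𝛔 a non-interacting SWAP with indices I. Let s be a τL-branching ℓ-bit string with 0 < ℓ < h. Then: (i) if ℓ ∉ I and ℓ+1 ∉ I, then σ_ℓ s is (𝛔𝛕)L-branching; (ii) if ℓ ∈ I, then σ_{ℓ−1}(ωs) = ω(σ_ℓ s) is (𝛔𝛕)L-branching; (iii) if ℓ+1 ∈ I, then either σ_ℓ s is (𝛔𝛕)L-branching or there exists a bit b ∈ {0,1} such that (σ_ℓ s)b is (𝛔𝛕)L-branching. -/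
section St10Helpers

variable {α : Type*} [Inhabited α]

lemma st10_ext (a b : List α) (hlen : a.length = b.length)
    (h : ∀ j < a.length, a.getD j default = b.getD j default) : a = b := by
  apply List.ext_getElem hlen
  intro n h1 h2
  rw [← List.getD_eq_getElem a default h1, ← List.getD_eq_getElem b default h2]
  exact h n h1

lemma st10_prefixD (a b : List α) (hlen : a.length ≤ b.length)
    (h : ∀ j < a.length, a.getD j default = b.getD j default) : a <+: b := by
  rw [List.prefix_iff_eq_take]
  apply st10_ext _ _ (by rw [List.length_take]; omega)
  intro j hj
  rw [h j hj]
  have hjb : j < b.length := lt_of_lt_of_le hj hlen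
  have hjt : j < (b.take a.length).length := by rw [List.length_take]; omega
  rw [List.getD_eq_getElem _ _ hjb, List.getD_eq_getElem _ _ hjt, List.getElem_take]

lemma st10_permList_len (π : Equiv.Perm ℕ) (l : List α) :
    (permList π l).length = l.length := by simp [permList]

lemma st10_permList_getD (π : Equiv.Perm ℕ) (l : List α) (j : ℕ) (hj : j < l.length) :
    (permList π l).getD j default = l.getD (π.symm j) default := by
  have hj' : j < (permList π l).length := by rwa [st10_permList_len]
  rw [List.getD_eq_getElem _ _ hj']
  simp only [permList, List.getElem_map, List.getElem_range]

lemma st10_getD_app_lt (a b : List α) (j : ℕ) (hj : j < a.length) :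
    (a ++ b).getD j default = a.getD j default := by
  have h2 : j < (a ++ b).length := by rw [List.length_append]; omega
  rw [List.getD_eq_getElem _ _ h2, List.getD_eq_getElem _ _ hj,
    List.getElem_append_left hj]

lemma st10_getD_app_right (a b : List α) (k : ℕ) (hk : k < b.length) :
    (a ++ b).getD (a.length + k) default = b.getD k default := by
  have h2 : a.length + k < (a ++ b).length := by rw [List.length_append]; omega
  rw [List.getD_eq_getElem _ _ h2, List.getD_eq_getElem _ _ hk,
    List.getElem_append_right (by omega)]
  congr 1
  omega

lemma st10_getD_app_self (a : List α) (x : α) (b : List α) :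
    (a ++ (x :: b)).getD a.length default = x := by
  have := st10_getD_app_right a (x :: b) 0 (by simp)
  simpa using this

lemma st10_getD_dropLast (a : List α) (j : ℕ) (hj : j < a.length - 1) :
    a.dropLast.getD j default = a.getD j default := by
  have h1 : j < a.dropLast.length := by rw [List.length_dropLast]; omega
  rw [List.getD_eq_getElem _ _ h1, List.getD_eq_getElem _ _ (by omega : j < a.length),
    List.getElem_dropLast]

end St10Helpers

theorem stmt10 (h : ℕ) (I : Finset ℕ) (σ τ : ℕ → Equiv.Perm ℕ) (L : Finset (List Bool))
    (hσ : IsNonInteractingSwap h I σ) (hτ : IsLabel h τ)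
    (hL : ∀ t ∈ L, t.length = h)
    (s : List Bool) (h1 : 0 < s.length) (h2 : s.length < h)
    (hbr : IsBranching h (τ h) L s) :
    -- (i) if ℓ ∉ I and ℓ+1 ∉ I (1-indexed), then σ_ℓ s is (στ)L-branching
    (((s.length - 1) ∉ I ∧ s.length ∉ I) →
      IsBranching h (σ h * τ h) L (permList (σ s.length) s)) ∧
    -- (ii) if ℓ ∈ I, then σ_{ℓ-1}(ωs) = ω(σ_ℓ s) is (στ)L-branching
    ((s.length - 1) ∈ I →
      (permList (σ (s.length - 1)) s.dropLast = (permList (σ s.length) s).dropLast ∧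
       IsBranching h (σ h * τ h) L ((permList (σ s.length) s).dropLast))) ∧
    -- (iii) if ℓ+1 ∈ I, then σ_ℓ s or (σ_ℓ s)b is (στ)L-branching
    (s.length ∈ I →
      (IsBranching h (σ h * τ h) L (permList (σ s.length) s) ∨
       ∃ b : Bool, IsBranching h (σ h * τ h) L (permList (σ s.length) s ++ [b]))) := by
  obtain ⟨hσ1, hσ2, hσ3, hσ4⟩ := hσ
  -- basic facts about σ
  have hinv : ∀ ℓ j, σ ℓ (σ ℓ j) = j := by
    intro ℓ j
    by_cases hc : ∃ i ∈ I, i + 2 ≤ ℓ ∧ (j = i ∨ j = i + 1)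
    · obtain ⟨i, hiI, hiℓ, hji⟩ := hc
      obtain ⟨e1, e2⟩ := hσ3 ℓ i hiI hiℓ
      rcases hji with rfl | rfl
      · rw [e1, e2]
      · rw [e2, e1]
    · rw [hσ4 ℓ j hc, hσ4 ℓ j hc]
  have hsymm : ∀ ℓ j, (σ ℓ).symm j = σ ℓ j := by
    intro ℓ j
    rw [Equiv.symm_apply_eq]
    exact (hinv ℓ j).symm
  have hlt : ∀ ℓ j, j < ℓ → σ ℓ j < ℓ := by
    intro ℓ j hj
    by_cases hc : ∃ i ∈ I, i + 2 ≤ ℓ ∧ (j = i ∨ j = i + 1)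
    · obtain ⟨i, hiI, hiℓ, hji⟩ := hc
      obtain ⟨e1, e2⟩ := hσ3 ℓ i hiI hiℓ
      rcases hji with rfl | rfl
      · rw [e1]; omega
      · rw [e2]; omega
    · rw [hσ4 ℓ j hc]; exact hj
  -- extract the branching data of s
  rcases hbr with he | ⟨t, htL, hst⟩ | ⟨-, -, ht0, ht1⟩
  · rw [he] at h1; simp at h1
  · have : s.length = h := by rw [hst, st10_permList_len, hL t htL]
    omega
  have htr : ∀ b : Bool, ∃ t ∈ L, (s ++ [b]) <+: permList (τ h) t := by
    intro b
    cases b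
    · exact ht0
    · exact ht1
  -- the master prefix lemma
  have master : ∀ (w t : List Bool), t ∈ L → w.length ≤ h →
      (∀ j < w.length, w.getD j default = (permList (τ h) t).getD (σ h j) default) →
      w <+: permList (σ h * τ h) t := by
    intro w t htL hwh hval
    have hth : t.length = h := hL t htL
    apply st10_prefixD
    · rw [st10_permList_len, hth]; exact hwh
    · intro j hj
      rw [hval j hj]
      have hjh : j < h := lt_of_lt_of_le hj hwh
      have hs : σ h j < h := hlt h j hjh
      rw [st10_permList_getD _ _ _ (by rw [hth]; exact hs),
        st10_permList_getD _ _ _ (by rw [hth]; exact hjh)]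
      have hmul : (σ h * τ h).symm j = (τ h).symm ((σ h).symm j) := rfl
      rw [hmul, hsymm h j]
  -- prefix facts for elements of L
  have hpre : ∀ (b : Bool) (t : List Bool), (s ++ [b]) <+: permList (τ h) t →
      (∀ k, k < s.length → (permList (τ h) t).getD k default = s.getD k default) ∧
      (permList (τ h) t).getD s.length default = b := by
    intro b t hp
    have hlen := hp.length_le
    rw [List.length_append] at hlen
    simp only [List.length_singleton] at hlen
    constructor
    · intro k hk
      have h1' : k < (s ++ [b]).length := by rw [List.length_append]; simp; omega
      have h2' : k < (permList (τ h) t).length := by omega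
      have e := hp.getElem h1'
      rw [List.getElem_append_left hk] at e
      rw [List.getD_eq_getElem _ _ h2', List.getD_eq_getElem _ _ hk, e]
    · have h1' : s.length < (s ++ [b]).length := by rw [List.length_append]; simp
      have e := hp.getElem h1'
      rw [List.getElem_append_right (le_refl s.length)] at e
      simp only [Nat.sub_self, List.getElem_singleton] at e
      rw [List.getD_eq_getElem _ _ (by omega), ← e]
  -- shared position analysis when s.length - 1 ∉ I
  have hshare : s.length - 1 ∉ I → ∀ j, j < s.length →
      σ h j = σ s.length j ∧ σ s.length j < s.length := by
    intro hnot1 j hj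
    by_cases hc : ∃ i ∈ I, j = i ∨ j = i + 1
    · obtain ⟨i, hiI, hji⟩ := hc
      have hne : i ≠ s.length - 1 := fun e => hnot1 (e ▸ hiI)
      rcases hji with hji | hji
      · rw [hji]
        have hi2 : i + 2 ≤ s.length := by omega
        obtain ⟨e1, -⟩ := hσ3 h i hiI (by omega)
        obtain ⟨f1, -⟩ := hσ3 s.length i hiI hi2
        exact ⟨by rw [e1, f1], by rw [f1]; omega⟩
      · rw [hji]
        have hi2 : i + 2 ≤ s.length := by omega
        obtain ⟨-, e2⟩ := hσ3 h i hiI (by omega)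
        obtain ⟨-, f2⟩ := hσ3 s.length i hiI hi2
        exact ⟨by rw [e2, f2], by rw [f2]; omega⟩
    · have hc1 : ¬∃ i ∈ I, i + 2 ≤ h ∧ (j = i ∨ j = i + 1) := by
        rintro ⟨i, hi, -, hj'⟩; exact hc ⟨i, hi, hj'⟩
      have hc2 : ¬∃ i ∈ I, i + 2 ≤ s.length ∧ (j = i ∨ j = i + 1) := by
        rintro ⟨i, hi, -, hj'⟩; exact hc ⟨i, hi, hj'⟩
      rw [hσ4 _ _ hc1, hσ4 _ _ hc2]
      exact ⟨rfl, hj⟩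
  refine ⟨?_, ?_, ?_⟩
  · -- Part (i)
    rintro ⟨hnot1, hnot2⟩
    have hsh := hshare hnot1
    have hfixℓ : σ h s.length = s.length := by
      apply hσ4
      rintro ⟨i, hiI, -, hji⟩
      rcases hji with h' | h'
      · exact hnot2 (h' ▸ hiI)
      · have : i = s.length - 1 := by omega
        exact hnot1 (this ▸ hiI)
    have trunc1 : ∀ b : Bool, IsTrunc (σ h * τ h) L (permList (σ s.length) s ++ [b]) := by
      intro b
      obtain ⟨t, htL, hp⟩ := htr b
      obtain ⟨hpk, hpl⟩ := hpre b t hp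
      refine ⟨t, htL, master _ t htL (by rw [List.length_append, st10_permList_len]; simp; omega) ?_⟩
      intro j hj
      rw [List.length_append, st10_permList_len] at hj
      simp only [List.length_singleton] at hj
      rcases Nat.lt_or_ge j s.length with hjs | hjs
      · obtain ⟨heq, hlt'⟩ := hsh j hjs
        rw [st10_getD_app_lt _ _ _ (by rw [st10_permList_len]; exact hjs),
          st10_permList_getD _ _ _ hjs, hsymm s.length j, heq, hpk _ hlt']
      · have hje : j = s.length := by omega
        subst hje
        have hw : (permList (σ s.length) s).length = s.length := st10_permList_len _ _
        have L1 : (permList (σ s.length) s ++ [b]).getD s.length default = b := by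
          have h0 := st10_getD_app_self (permList (σ s.length) s) b []
          rwa [hw] at h0
        have L2 : (permList (τ h) t).getD (σ h s.length) default = b := by
          rw [hfixℓ]; exact hpl
        rw [L1, L2]
    exact Or.inr (Or.inr ⟨by rw [st10_permList_len]; exact h1,
      by rw [st10_permList_len]; exact h2, trunc1 false, trunc1 true⟩)
  · -- Part (ii)
    intro hmem
    have h1' : 1 ≤ s.length := h1
    have hs1 : σ h (s.length - 1) = s.length := by
      obtain ⟨e1, -⟩ := hσ3 h (s.length - 1) hmem (by have := hσ1 _ hmem; omega)
      rw [e1]; omega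
    have hshare2 : ∀ j, j < s.length - 1 →
        σ h j = σ s.length j ∧ σ s.length j < s.length - 1 ∧
        σ (s.length - 1) j = σ s.length j := by
      intro j hj
      by_cases hc : ∃ i ∈ I, j = i ∨ j = i + 1
      · obtain ⟨i, hiI, hji⟩ := hc
        have hij : i ≤ j ∧ j ≤ i + 1 := by rcases hji with hji | hji <;> omega
        have hne : i ≠ s.length - 1 := by omega
        have hne2 : i ≠ s.length - 2 := by
          intro e
          rcases hσ2 i hiI (s.length - 1) hmem (by omega) with h' | h' <;> omega
        have hi3 : i + 2 ≤ s.length - 1 := by omega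
        obtain ⟨e1, e2⟩ := hσ3 h i hiI (by omega)
        obtain ⟨f1, f2⟩ := hσ3 s.length i hiI (by omega)
        obtain ⟨g1, g2⟩ := hσ3 (s.length - 1) i hiI hi3
        rcases hji with hji | hji
        · rw [hji]
          exact ⟨by rw [e1, f1], by rw [f1]; omega, by rw [g1, f1]⟩
        · rw [hji]
          exact ⟨by rw [e2, f2], by rw [f2]; omega, by rw [g2, f2]⟩
      · have hc1 : ¬∃ i ∈ I, i + 2 ≤ h ∧ (j = i ∨ j = i + 1) := by
          rintro ⟨i, hi, -, hj'⟩; exact hc ⟨i, hi, hj'⟩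
        have hc2 : ¬∃ i ∈ I, i + 2 ≤ s.length ∧ (j = i ∨ j = i + 1) := by
          rintro ⟨i, hi, -, hj'⟩; exact hc ⟨i, hi, hj'⟩
        have hc3 : ¬∃ i ∈ I, i + 2 ≤ s.length - 1 ∧ (j = i ∨ j = i + 1) := by
          rintro ⟨i, hi, -, hj'⟩; exact hc ⟨i, hi, hj'⟩
        rw [hσ4 _ _ hc1, hσ4 _ _ hc2, hσ4 _ _ hc3]
        exact ⟨rfl, hj, rfl⟩
    have E : permList (σ (s.length - 1)) s.dropLast = (permList (σ s.length) s).dropLast := by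
      apply st10_ext
      · rw [st10_permList_len, List.length_dropLast, List.length_dropLast, st10_permList_len]
      · intro j hj
        rw [st10_permList_len, List.length_dropLast] at hj
        obtain ⟨hA, hB, hC⟩ := hshare2 j hj
        rw [st10_permList_getD _ _ _ (by rw [List.length_dropLast]; exact hj),
          hsymm (s.length - 1) j, hC, st10_getD_dropLast _ _ hB,
          st10_getD_dropLast _ _ (by rw [st10_permList_len]; exact hj),
          st10_permList_getD _ _ _ (by omega), hsymm s.length j]
    have trunc2 : ∀ b : Bool,
        IsTrunc (σ h * τ h) L ((permList (σ s.length) s).dropLast ++ [b]) := by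
      intro b
      obtain ⟨t, htL, hp⟩ := htr b
      obtain ⟨hpk, hpl⟩ := hpre b t hp
      refine ⟨t, htL, master _ t htL ?_ ?_⟩
      · rw [List.length_append, List.length_dropLast, st10_permList_len]; simp; omega
      · intro j hj
        rw [List.length_append, List.length_dropLast, st10_permList_len] at hj
        simp only [List.length_singleton] at hj
        rcases Nat.lt_or_ge j (s.length - 1) with hjs | hjs
        · obtain ⟨hA, hB, -⟩ := hshare2 j hjs
          rw [st10_getD_app_lt _ _ _ (by rw [List.length_dropLast, st10_permList_len]; exact hjs),
            st10_getD_dropLast _ _ (by rw [st10_permList_len]; exact hjs),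
            st10_permList_getD _ _ _ (by omega), hsymm s.length j, hA, hpk _ (by omega)]
        · have hje : j = s.length - 1 := by omega
          subst hje
          have hw : (permList (σ s.length) s).dropLast.length = s.length - 1 := by
            rw [List.length_dropLast, st10_permList_len]
          have L1 : ((permList (σ s.length) s).dropLast ++ [b]).getD (s.length - 1) default = b := by
            have h0 := st10_getD_app_self (permList (σ s.length) s).dropLast b []
            rwa [hw] at h0
          have L2 : (permList (τ h) t).getD (σ h (s.length - 1)) default = b := by
            rw [hs1]; exact hpl
          rw [L1, L2]
    refine ⟨E, ?_⟩
    rcases Nat.eq_or_lt_of_le h1' with he | h2le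
    · left
      have : (permList (σ s.length) s).dropLast.length = 0 := by
        rw [List.length_dropLast, st10_permList_len]; omega
      exact List.length_eq_zero_iff.mp this
    · exact Or.inr (Or.inr ⟨by rw [List.length_dropLast, st10_permList_len]; omega,
        by rw [List.length_dropLast, st10_permList_len]; omega, trunc2 false, trunc2 true⟩)
  · -- Part (iii)
    intro hmem
    have hnot1 : s.length - 1 ∉ I := by
      intro h'
      rcases hσ2 _ h' _ hmem (by omega) with hx | hx <;> omega
    have hsh := hshare hnot1
    obtain ⟨hsA, hsB⟩ := hσ3 h s.length hmem (hσ1 _ hmem)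
    have hlh : s.length + 2 ≤ h := hσ1 _ hmem
    have hw : (permList (σ s.length) s).length = s.length := st10_permList_len _ _
    have key : ∀ (b : Bool) (t : List Bool), t ∈ L → (s ++ [b]) <+: permList (τ h) t →
        (permList (σ s.length) s ++
          [(permList (τ h) t).getD (s.length + 1) default, b]) <+: permList (σ h * τ h) t := by
      intro b t htL hp
      obtain ⟨hpk, hpl⟩ := hpre b t hp
      apply master _ t htL
      · rw [List.length_append, st10_permList_len]; simp; omega
      · intro j hj
        rw [List.length_append, st10_permList_len] at hj
        simp only [List.length_cons, List.length_singleton, List.length_nil] at hj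
        rcases Nat.lt_or_ge j s.length with hjs | hjs
        · obtain ⟨hA, hB⟩ := hsh j hjs
          rw [st10_getD_app_lt _ _ _ (by rw [st10_permList_len]; exact hjs),
            st10_permList_getD _ _ _ hjs, hsymm s.length j, hA, hpk _ hB]
        · have : j = s.length ∨ j = s.length + 1 := by omega
          rcases this with he | he <;> subst he
          · have L1 : (permList (σ s.length) s ++
                [(permList (τ h) t).getD (s.length + 1) default, b]).getD s.length default =
                (permList (τ h) t).getD (s.length + 1) default := by
              have h0 := st10_getD_app_self (permList (σ s.length) s)
                ((permList (τ h) t).getD (s.length + 1) default) [b]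
              rwa [hw] at h0
            rw [L1, hsA]
          · have L1 : (permList (σ s.length) s ++
                [(permList (τ h) t).getD (s.length + 1) default, b]).getD (s.length + 1) default
                = b := by
              have h2 := st10_getD_app_right (permList (σ s.length) s)
                [(permList (τ h) t).getD (s.length + 1) default, b] 1 (by simp)
              rw [hw] at h2
              simpa [List.getD] using h2
            rw [L1, hsB, hpl]
    obtain ⟨t0, ht0L, hp0⟩ := htr false
    obtain ⟨t1, ht1L, hp1⟩ := htr true
    have k0 := key false t0 ht0L hp0
    have k1 := key true t1 ht1L hp1
    obtain ⟨c0, hc0⟩ : ∃ c : Bool, c = (permList (τ h) t0).getD (s.length + 1) default :=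
      ⟨_, rfl⟩
    obtain ⟨c1, hc1⟩ : ∃ c : Bool, c = (permList (τ h) t1).getD (s.length + 1) default :=
      ⟨_, rfl⟩
    rw [← hc0] at k0
    rw [← hc1] at k1
    clear hc0 hc1
    by_cases hcc : c0 = c1
    · right
      refine ⟨c0, Or.inr (Or.inr ⟨?_, ?_, ⟨t0, ht0L, ?_⟩, ⟨t1, ht1L, ?_⟩⟩)⟩
      · rw [List.length_append, st10_permList_len]; simp
      · rw [List.length_append, st10_permList_len]; simp; omega
      · rw [List.append_assoc]; exact k0
      · rw [List.append_assoc, hcc]; exact k1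
    · left
      have hbool : ∀ x : Bool, x = c0 ∨ x = c1 := by
        intro x
        clear k0 k1
        revert hcc
        cases c0 <;> cases c1 <;> cases x <;> decide
      have truncx : ∀ x : Bool, IsTrunc (σ h * τ h) L (permList (σ s.length) s ++ [x]) := by
        intro x
        rcases hbool x with he | he
        · refine ⟨t0, ht0L, ?_⟩
          rw [he]
          exact List.IsPrefix.trans ⟨[false], by simp⟩ k0
        · refine ⟨t1, ht1L, ?_⟩
          rw [he]
          exact List.IsPrefix.trans ⟨[true], by simp⟩ k1
      exact Or.inr (Or.inr ⟨by rw [st10_permList_len]; exact h1,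
        by rw [st10_permList_len]; omega, truncx false, truncx true⟩)
end
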